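/- Let S' ⊆ S be a set of generators for the observation table. Then S' is minimal (i.e., no proper subset of S' is a set of generators) if and only if there are no s ∈ S' and U ∈ T(S' \ {s}) such that row_t♯(U) = row_t(s). In particular, the algorithm that repeatedly removes from S' any element s for which such a U exists terminates with a minimal set of generators. -/

import Mathlib

/-- A monad on the category of sets, given by an endofunctor `T` with unit `pure` (η)
and multiplication `mult` (μ), satisfying functoriality, naturality and the monad laws. -/
structure SetMonad where
  T : Type → Type
  map : {X Y : Type} → (X → Y) → T X → T Y
  pure : {X : Type} → X → T X
  mult : {X : Type} → T (T X) → T X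
  map_id : ∀ {X : Type} (t : T X), map id t = t
  map_comp : ∀ {X Y Z : Type} (g : Y → Z) (f : X → Y) (t : T X),
    map (g ∘ f) t = map g (map f t)
  pure_natural : ∀ {X Y : Type} (f : X → Y) (x : X), map f (pure x) = pure (f x)
  mult_natural : ∀ {X Y : Type} (f : X → Y) (t : T (T X)),
    map f (mult t) = mult (map (map f) t)
  mult_pure : ∀ {X : Type} (t : T X), mult (pure t) = t
  mult_map_pure : ∀ {X : Type} (t : T X), mult (map pure t) = t
  mult_assoc : ∀ {X : Type} (t : T (T (T X))), mult (mult t) = mult (map mult t)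

/-- An Eilenberg-Moore algebra `(carrier, str)` for the monad `M`. -/
structure AlgOver (M : SetMonad) where
  carrier : Type
  str : M.T carrier → carrier
  str_pure : ∀ x, str (M.pure x) = x
  str_mult : ∀ t, str (M.mult t) = str (M.map str t)

/-- `f` is a `T`-algebra homomorphism from `X` to `Y`: `f ∘ h = k ∘ T f`. -/
def IsHom (M : SetMonad) (X Y : AlgOver M) (f : X.carrier → Y.carrier) : Prop :=
  ∀ t : M.T X.carrier, f (X.str t) = Y.str (M.map f t)

/-- The free `T`-algebra `(T U, μ_U)` on a set `U`. -/
def freeAlg (M : SetMonad) (U : Type) : AlgOver M where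
  carrier := M.T U
  str := M.mult
  str_pure := M.mult_pure
  str_mult := M.mult_assoc

/-- The free `T`-extension `g♯ = v ∘ T g : T U → V` of a function `g : U → V`
into a `T`-algebra `(V, v)`. -/
def extAlg (M : SetMonad) {U : Type} (V : AlgOver M) (g : U → V.carrier) :
    M.T U → V.carrier :=
  fun t => V.str (M.map g t)

/-- The pointwise `T`-algebra structure on `V^A` for a `T`-algebra `V`. -/
def powAlg (M : SetMonad) (A : Type) (V : AlgOver M) : AlgOver M where
  carrier := A → V.carrier
  str := fun t a => V.str (M.map (fun g => g a) t)
  str_pure := by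
    intro x
    funext a
    show V.str (M.map (fun g => g a) (M.pure x)) = x a
    rw [M.pure_natural]
    exact V.str_pure _
  str_mult := by
    intro t
    funext a
    show V.str (M.map (fun g => g a) (M.mult t)) =
      V.str (M.map (fun g => g a) (M.map (fun t a => V.str (M.map (fun g => g a) t)) t))
    rw [M.mult_natural, V.str_mult, ← M.map_comp, ← M.map_comp]
    rfl

/-- The top part of the observation table: `row_t : S → O^E`, `row_t(s)(e) = L(se)`. -/
def rowT (A : Type) {Oc : Type} (L : List A → Oc) (S E : Set (List A)) :
    ↥S → ↥E → Oc :=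
  fun s e => L (s.1 ++ e.1)

/-- The bottom part of the observation table: `row_b : S → (O^E)^A`,
`row_b(s)(a)(e) = L(sae)`. -/
def rowB (A : Type) {Oc : Type} (L : List A → Oc) (S E : Set (List A)) :
    ↥S → A → ↥E → Oc :=
  fun s a e => L (s.1 ++ a :: e.1)

/-- The free `T`-extension `row_t♯ : T(S) → O^E`. -/
def rowTs (M : SetMonad) (A : Type) (O : AlgOver M) (L : List A → O.carrier)
    (S E : Set (List A)) : M.T ↥S → ↥E → O.carrier :=
  extAlg M (powAlg M (↥E) O) (rowT A L S E)

/-- The free `T`-extension `row_b♯ : T(S) → (O^E)^A`. -/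
def rowBs (M : SetMonad) (A : Type) (O : AlgOver M) (L : List A → O.carrier)
    (S E : Set (List A)) : M.T ↥S → A → ↥E → O.carrier :=
  extAlg M (powAlg M A (powAlg M (↥E) O)) (rowB A L S E)

/-- `S'` is a set of generators for the observation table over `(S, E)`. -/
def IsGenSet (M : SetMonad) (A : Type) (O : AlgOver M) (L : List A → O.carrier)
    (S E : Set (List A)) (S' : Set (List A)) (hsub : S' ⊆ S) : Prop :=
  ∀ t : ↥S, ∃ U : M.T ↥S',
    rowT A L S E t = rowTs M A O L S E (M.map (Set.inclusion hsub) U)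

lemma ext_pure (M : SetMonad) {U : Type} (V : AlgOver M) (g : U → V.carrier) (x : U) :
    extAlg M V g (M.pure x) = g x := by
  unfold extAlg; rw [M.pure_natural, V.str_pure]

lemma ext_map (M : SetMonad) {U W : Type} (V : AlgOver M) (g : U → V.carrier)
    (j : W → U) (t : M.T W) :
    extAlg M V g (M.map j t) = extAlg M V (g ∘ j) t := by
  unfold extAlg; rw [← M.map_comp]

lemma ext_bind (M : SetMonad) {U W : Type} (V : AlgOver M) (g : U → V.carrier)
    (k : W → M.T U) (t : M.T W) :
    extAlg M V g (M.mult (M.map k t)) = extAlg M V (fun x => extAlg M V g (k x)) t := by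
  unfold extAlg
  rw [M.mult_natural, ← M.map_comp, V.str_mult, ← M.map_comp]
  rfl

/-- a set of generators `S'` is minimal (no proper subset generates) iff
no `s ∈ S'` has its row decomposable over `T(S' \ {s})`; moreover every set of
generators contains a minimal one (so the removal algorithm terminates with a minimal
set of generators). -/
theorem stmt14 (M : SetMonad) (A : Type) [Finite A] (O : AlgOver M)
    (L : List A → O.carrier) (S E : Set (List A)) (hSfin : S.Finite)
    (hEfin : E.Finite) (hSe : [] ∈ S) (hEe : [] ∈ E)
    (S' : Set (List A)) (hsub : S' ⊆ S)
    (hgen : IsGenSet M A O L S E S' hsub) :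
    ((∀ (S'' : Set (List A)) (h2 : S'' ⊆ S'), S'' ≠ S' →
        ¬ IsGenSet M A O L S E S'' (h2.trans hsub)) ↔
      ¬ ∃ (s : List A) (hs : s ∈ S') (U : M.T ↥(S' \ {s})),
        rowTs M A O L S E (M.map (Set.inclusion (Set.diff_subset.trans hsub)) U) =
          rowT A L S E ⟨s, hsub hs⟩) ∧
    ∃ (S'' : Set (List A)) (h2 : S'' ⊆ S'),
      IsGenSet M A O L S E S'' (h2.trans hsub) ∧
      ∀ (S₃ : Set (List A)) (h3 : S₃ ⊆ S''), S₃ ≠ S'' →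
        ¬ IsGenSet M A O L S E S₃ ((h3.trans h2).trans hsub) := by
  classical
  constructor
  · constructor
    · -- minimality → no removable element
      intro hmin
      rintro ⟨s, hs, U, hU⟩
      have hne : S' \ {s} ≠ S' := by
        intro h
        have : s ∈ S' \ {s} := by rw [h]; exact hs
        exact this.2 rfl
      apply hmin (S' \ {s}) Set.diff_subset hne
      intro t
      obtain ⟨V, hV⟩ := hgen t
      set g : ↥(S' \ {s}) → (↥E → O.carrier) :=
        rowT A L S E ∘ Set.inclusion (Set.diff_subset.trans hsub) with hg
      set f : ↥S' → M.T ↥(S' \ {s}) :=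
        fun x => if h : x.1 = s then U else M.pure ⟨x.1, x.2, h⟩ with hf
      have hfix : ∀ x : ↥S',
          extAlg M (powAlg M (↥E) O) g (f x) =
          rowT A L S E (Set.inclusion hsub x) := by
        intro x
        by_cases h : x.1 = s
        · rw [hf]
          simp only [dif_pos h]
          have h1 := hU
          erw [rowTs, ext_map] at h1
          erw [← hg] at h1
          rw [h1]
          have h2 : Set.inclusion hsub x = (⟨s, hsub hs⟩ : ↥S) := by
            apply Subtype.ext; exact h
          rw [h2]
        · rw [hf]
          simp only [dif_neg h]
          erw [ext_pure]
          rfl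
      refine ⟨M.mult (M.map f V), ?_⟩
      erw [rowTs, ext_map, ext_bind]
      have : (fun x => extAlg M (powAlg M (↥E) O)
          (rowT A L S E ∘ Set.inclusion (Set.diff_subset.trans hsub)) (f x)) =
          rowT A L S E ∘ Set.inclusion hsub := funext hfix
      rw [this]
      erw [rowTs, ext_map] at hV
      exact hV
    · -- no removable element → minimality
      intro hno
      intro S'' h2 hne hgen''
      obtain ⟨s, hs', hns⟩ := Set.exists_of_ssubset (HasSubset.Subset.ssubset_of_ne h2 hne)
      obtain ⟨U, hU⟩ := hgen'' ⟨s, hsub hs'⟩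
      have hj : S'' ⊆ S' \ {s} := fun x hx => ⟨h2 hx, fun h => hns (h ▸ hx)⟩
      apply hno
      refine ⟨s, hs', M.map (Set.inclusion hj) U, ?_⟩
      erw [rowTs, ext_map, ext_map]
      erw [rowTs, ext_map] at hU
      exact hU.symm
  · -- existence of a minimal generating subset
    have key : ∀ n : ℕ, ∀ (S'' : Set (List A)) (h2 : S'' ⊆ S'), S''.ncard ≤ n →
        IsGenSet M A O L S E S'' (h2.trans hsub) →
        ∃ (S₃ : Set (List A)) (h3 : S₃ ⊆ S''),
          IsGenSet M A O L S E S₃ ((h3.trans h2).trans hsub) ∧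
          ∀ (S₄ : Set (List A)) (h4 : S₄ ⊆ S₃), S₄ ≠ S₃ →
            ¬ IsGenSet M A O L S E S₄ (((h4.trans h3).trans h2).trans hsub) := by
      intro n
      induction n with
      | zero =>
        intro S'' h2 hcard hg
        refine ⟨S'', le_refl _, hg, ?_⟩
        intro S₄ h4 hne _
        have hfin : S''.Finite := hSfin.subset (h2.trans hsub)
        have : S'' = ∅ := by
          rw [← Set.ncard_eq_zero hfin]
          omega
        exact hne (by rw [this] at h4 ⊢; exact Set.subset_eq_empty h4 rfl)
      | succ n ih =>
        intro S'' h2 hcard hg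
        by_cases hex : ∃ (S₃ : Set (List A)) (h3 : S₃ ⊆ S''), S₃ ≠ S'' ∧
            IsGenSet M A O L S E S₃ ((h3.trans h2).trans hsub)
        · obtain ⟨S₃, h3, hne3, hg3⟩ := hex
          have hfin : S''.Finite := hSfin.subset (h2.trans hsub)
          have hlt : S₃.ncard < S''.ncard :=
            Set.ncard_lt_ncard (HasSubset.Subset.ssubset_of_ne h3 hne3) hfin
          obtain ⟨S₄, h4, hg4, hmin4⟩ := ih S₃ (h3.trans h2) (by omega) hg3
          exact ⟨S₄, h4.trans h3, hg4, fun S₅ h5 hne5 hg5 => hmin4 S₅ h5 hne5 hg5⟩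
        · push_neg at hex
          refine ⟨S'', le_refl _, hg, ?_⟩
          intro S₄ h4 hne hg4
          exact hex S₄ h4 hne hg4
    obtain ⟨S₃, h3, hg3, hmin⟩ :=
      key S'.ncard S' (le_refl _) (le_refl _) hgen
    exact ⟨S₃, h3, hg3, fun S₄ h4 hne hg4 => hmin S₄ h4 hne hg4⟩
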